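/- Let N ≥ 6 and p ∈ (N/(N-2), (N+2)/(N-2)] with q determined by 1/(p+1) + 1/(q+1) = (N-2)/N. Define σ₁(p) := pN - N(q+1)/(N-2) - N/(q+1). Then σ₁ is increasing in p; moreover, for N = 6, σ₁(3/2) > 0, so σ₁(p) > 0 for all p ∈ (3/2, 2]. -/
import Mathlib


/-- σ₁(p) = pN - N(q+1)/(N-2) - N/(q+1), where q = q(p) is determined by the
criticality relation N/(q+1) = N - 2 - N/(p+1), i.e. q+1 = N/(N - 2 - N/(p+1)). -/
noncomputable def sigma1 (N p : ℝ) : ℝ :=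
  p * N - N * (N / (N - 2 - N / (p + 1))) / (N - 2) - (N - 2 - N / (p + 1))

set_option maxHeartbeats 2000000 in
lemma sigma1_key (n a b : ℝ) (hn : 2 < n) (ha : 1 < a) (hab : a < b)
    (hDa : 0 < n - 2 - n / (a + 1)) (hDb : 0 < n - 2 - n / (b + 1)) :
    sigma1 n a < sigma1 n b := by
  have hA : (0:ℝ) < a + 1 := by linarith
  have hB : (0:ℝ) < b + 1 := by linarith
  have hn2 : (0:ℝ) < n - 2 := by linarith
  have ea : n - 2 - n / (a + 1) = ((n-2)*(a+1) - n) / (a+1) := by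
    field_simp
  have eb : n - 2 - n / (b + 1) = ((n-2)*(b+1) - n) / (b+1) := by
    field_simp
  have hPa : 0 < (n-2)*(a+1) - n := by
    have := mul_pos hDa hA
    rw [ea] at this
    nlinarith [div_mul_cancel₀ ((n-2)*(a+1) - n) hA.ne']
  have hPb : 0 < (n-2)*(b+1) - n := by
    have := mul_pos hDb hB
    rw [eb] at this
    nlinarith [div_mul_cancel₀ ((n-2)*(b+1) - n) hB.ne']
  have hkey : sigma1 n b - sigma1 n a =
      (b - a) * ((n - n / ((a+1)*(b+1))) +
        n^3 / ((n-2) * ((n-2)*(a+1) - n) * ((n-2)*(b+1) - n))) := by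
    unfold sigma1
    rw [ea, eb]
    field_simp
    ring
  have h1 : n / ((a+1)*(b+1)) < n := by
    apply div_lt_self (by linarith)
    nlinarith
  have h2 : 0 < n^3 / ((n-2) * ((n-2)*(a+1) - n) * ((n-2)*(b+1) - n)) := by
    positivity
  nlinarith [mul_pos (by linarith : (0:ℝ) < b - a)
    (by linarith : (0:ℝ) < (n - n / ((a+1)*(b+1))) +
      n^3 / ((n-2) * ((n-2)*(a+1) - n) * ((n-2)*(b+1) - n)))]

theorem stmt_11 (N : ℕ) (hN : 6 ≤ N) :
    StrictMonoOn (sigma1 N) (Set.Icc ((N : ℝ) / (N - 2)) (((N : ℝ) + 2) / (N - 2))) ∧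
    (N = 6 → 0 < sigma1 6 (3 / 2) ∧ ∀ p ∈ Set.Ioc (3 / 2 : ℝ) 2, 0 < sigma1 6 p) := by
  have hNR : (6:ℝ) ≤ N := by exact_mod_cast hN
  have hn2 : (0:ℝ) < (N:ℝ) - 2 := by linarith
  have hlow : (1:ℝ) < (N:ℝ) / ((N:ℝ) - 2) := (one_lt_div hn2).mpr (by linarith)
  have hD : ∀ x : ℝ, (N:ℝ) / ((N:ℝ) - 2) ≤ x → 0 < (N:ℝ) - 2 - (N:ℝ) / (x + 1) := by
    intro x hx
    have hx1 : (1:ℝ) < x := lt_of_lt_of_le hlow hx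
    have hX : (0:ℝ) < x + 1 := by linarith
    have h1 : (N:ℝ) / ((N:ℝ) - 2) < x + 1 := lt_of_le_of_lt hx (by linarith)
    have h2 : (N:ℝ) < (x + 1) * ((N:ℝ) - 2) := (div_lt_iff₀ hn2).mp h1
    have : (N:ℝ) / (x + 1) < (N:ℝ) - 2 := (div_lt_iff₀ hX).mpr (by nlinarith)
    linarith
  have hmono : StrictMonoOn (sigma1 N)
      (Set.Icc ((N : ℝ) / (N - 2)) (((N : ℝ) + 2) / (N - 2))) := by
    intro a haI b hbI hab
    exact sigma1_key N a b (by linarith) (lt_of_lt_of_le hlow haI.1) hab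
      (hD a haI.1) (hD b hbI.1)
  refine ⟨hmono, ?_⟩
  rintro rfl
  have hval : (0:ℝ) < sigma1 6 (3/2) := by
    unfold sigma1; norm_num
  refine ⟨hval, ?_⟩
  intro p hp
  have h32 : ((6:ℕ):ℝ) / (((6:ℕ):ℝ) - 2) = 3/2 := by norm_num
  have h2' : (((6:ℕ):ℝ) + 2) / (((6:ℕ):ℝ) - 2) = 2 := by norm_num
  have hmem1 : (3/2 : ℝ) ∈ Set.Icc (((6:ℕ):ℝ) / (((6:ℕ):ℝ) - 2)) ((((6:ℕ):ℝ) + 2) / (((6:ℕ):ℝ) - 2)) := by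
    rw [h32, h2']; constructor <;> norm_num
  have hmem2 : p ∈ Set.Icc (((6:ℕ):ℝ) / (((6:ℕ):ℝ) - 2)) ((((6:ℕ):ℝ) + 2) / (((6:ℕ):ℝ) - 2)) := by
    rw [h32, h2']; exact ⟨le_of_lt hp.1, hp.2⟩
  have := hmono hmem1 hmem2 hp.1
  have hc : sigma1 ((6:ℕ):ℝ) = sigma1 (6:ℝ) := by norm_num
  rw [hc] at this
  linarith
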